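/- arXiv:2510.22464 — 3 statements merged into one kernel-verified Lean document; each statement's English description precedes it below -/
import Mathlib

section
/- Let K : ℝ → ℝ be a symmetric continuous kernel with 0 ≤ K(x) ≤ K(0) for all x, attaining its maximum K(0) > 0 only at x = 0, and with K(x) → 0 as |x| → ∞. Let a = (a_1, ..., a_m) be a finite list of real numbers with unique mode t. Then for every r > 0 there exists h_0 > 0 such that for all bandwidths 0 < h ≤ h_0 and all x ∈ ℝ with |x − t| ≥ r, KD(a, K, h, t) > KD(a, K, h, x); in particular every global maximizer of x ↦ KD(a, K, h, x) lies within distance r of t. -/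
open Finset Filter

/-- Number of occurrences of the value `s` in the finite list `a`. -/
noncomputable def nCount {m : ℕ} (a : Fin m → ℝ) (s : ℝ) : ℕ :=
  (Finset.univ.filter (fun i => a i = s)).card

/-- `t` is the unique mode of the finite list `a`: it appears in `a` and its
multiplicity strictly exceeds that of every other value appearing in `a`. -/
def UniqueMode {m : ℕ} (a : Fin m → ℝ) (t : ℝ) : Prop :=
  (∃ i, a i = t) ∧ ∀ s : ℝ, (∃ i, a i = s) → s ≠ t → nCount a s < nCount a t

/-- Kernel density of the list `a` with kernel `K`, bandwidth `h`, at `x`. -/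
noncomputable def KD {m : ℕ} (a : Fin m → ℝ) (K : ℝ → ℝ) (h x : ℝ) : ℝ :=
  (1 / (m * h)) * ∑ i, K ((x - a i) / h)

/-- For a symmetric continuous kernel `K` with `0 ≤ K(x) ≤ K(0)`,
attaining its maximum `K(0) > 0` only at `0`, vanishing at infinity, and a finite
list `a` with unique mode `t`: for every `r > 0` there is `h₀ > 0` such that for all
bandwidths `0 < h ≤ h₀` and all `x` with `|x − t| ≥ r`, `KD(a,K,h,t) > KD(a,K,h,x)`;
in particular every global maximizer of `KD(a,K,h,·)` lies within distance `r` of `t`. -/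
theorem stmt1 (K : ℝ → ℝ)
    (hcont : Continuous K)
    (hsymm : ∀ x, K (-x) = K x)
    (hnonneg : ∀ x, 0 ≤ K x) (hle : ∀ x, K x ≤ K 0)
    (hpos : 0 < K 0)
    (hmaxonly : ∀ x, K x = K 0 → x = 0)
    (hvanish : Tendsto K (cocompact ℝ) (nhds 0))
    (m : ℕ) (a : Fin m → ℝ) (t : ℝ)
    (hmode : UniqueMode a t) :
    ∀ r : ℝ, 0 < r → ∃ h₀ : ℝ, 0 < h₀ ∧ ∀ h : ℝ, 0 < h → h ≤ h₀ →
      (∀ x : ℝ, r ≤ |x - t| → KD a K h x < KD a K h t) ∧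
      (∀ x : ℝ, (∀ y : ℝ, KD a K h y ≤ KD a K h x) → |x - t| < r) := by
  intro r hr
  obtain ⟨i0, hi0⟩ := hmode.1
  have hm : 0 < m := i0.pos
  have hmR : (0:ℝ) < m := by exact_mod_cast hm
  have hnt : 1 ≤ nCount a t :=
    Finset.card_pos.mpr ⟨i0, Finset.mem_filter.mpr ⟨Finset.mem_univ _, hi0⟩⟩
  -- minimal separation δ
  set D : Finset ℝ :=
    ((Finset.univ : Finset (Fin m × Fin m)).filter fun p => a p.1 ≠ a p.2).image
      (fun p => |a p.1 - a p.2|) with hD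
  have hEne : (insert r D).Nonempty := ⟨r, Finset.mem_insert_self _ _⟩
  set δ := (insert r D).min' hEne with hδdef
  have hδpos : 0 < δ := by
    have hmem := (insert r D).min'_mem hEne
    rw [Finset.mem_insert] at hmem
    rcases hmem with hmem | hmem
    · rw [hδdef, hmem]; exact hr
    · obtain ⟨p, hp, hpe⟩ := Finset.mem_image.mp hmem
      have hne := (Finset.mem_filter.mp hp).2
      rw [hδdef, ← hpe]
      exact abs_pos.mpr (sub_ne_zero.mpr hne)
  have hδr : δ ≤ r := Finset.min'_le _ _ (Finset.mem_insert_self _ _)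
  have hδdist : ∀ i j, a i ≠ a j → δ ≤ |a i - a j| := by
    intro i j hij
    exact Finset.min'_le _ _ (Finset.mem_insert_of_mem
      (Finset.mem_image.mpr ⟨(i, j), Finset.mem_filter.mpr ⟨Finset.mem_univ _, hij⟩, rfl⟩))
  -- vanishing at infinity
  set ε := K 0 / (2 * m) with hεdef
  have hε : 0 < ε := by rw [hεdef]; positivity
  have hev : ∀ᶠ u in cocompact ℝ, K u < ε := hvanish.eventually (gt_mem_nhds hε)
  rw [cocompact_eq_atBot_atTop, eventually_sup] at hev
  obtain ⟨M, hM⟩ := eventually_atTop.mp hev.2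
  set M' := max M 1 with hM'def
  have hM'pos : (0:ℝ) < M' := lt_of_lt_of_le one_pos (le_max_right _ _)
  have hKsmall : ∀ u : ℝ, M' ≤ |u| → K u < ε := by
    intro u hu
    rcases le_or_gt 0 u with hu0 | hu0
    · rw [abs_of_nonneg hu0] at hu
      exact hM u (le_trans (le_max_left _ _) hu)
    · have h1 : K u = K (-u) := by have := hsymm (-u); rwa [neg_neg] at this
      rw [abs_of_neg hu0] at hu
      rw [h1]
      exact hM (-u) (le_trans (le_max_left _ _) hu)
  refine ⟨δ / (2 * M'), by positivity, fun h hh hh0 => ?_⟩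
  have hMle : M' ≤ δ / (2 * h) := by
    rw [le_div_iff₀ (by positivity)]
    have h1 : h * (2 * M') ≤ (δ / (2 * M')) * (2 * M') :=
      mul_le_mul_of_nonneg_right hh0 (by positivity)
    have h2 : (δ / (2 * M')) * (2 * M') = δ := div_mul_cancel₀ _ (by positivity)
    nlinarith
  have key : ∀ x : ℝ, r ≤ |x - t| → KD a K h x < KD a K h t := by
    intro x hx
    set N := (Finset.univ : Finset (Fin m)).filter (fun i => |x - a i| < δ / 2) with hN
    have hcard : N.card + 1 ≤ nCount a t := by
      rcases N.eq_empty_or_nonempty with he | ⟨j, hj⟩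
      · rw [he]; simpa using hnt
      · have hjlt : |x - a j| < δ / 2 := (Finset.mem_filter.mp hj).2
        have hsne : a j ≠ t := by
          intro hjt
          rw [hjt] at hjlt
          linarith
        have hsub : N ⊆ Finset.univ.filter (fun i => a i = a j) := by
          intro i hi
          have hilt : |x - a i| < δ / 2 := (Finset.mem_filter.mp hi).2
          have htri : |a i - a j| ≤ |x - a i| + |x - a j| := by
            calc |a i - a j| ≤ |a i - x| + |x - a j| := abs_sub_le _ _ _
              _ = |x - a i| + |x - a j| := by rw [abs_sub_comm]
          have heq : a i = a j := by
            by_contra hne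
            have := hδdist i j hne
            linarith
          exact Finset.mem_filter.mpr ⟨Finset.mem_univ _, heq⟩
        have h1 : N.card ≤ nCount a (a j) := Finset.card_le_card hsub
        have h2 : nCount a (a j) < nCount a t := hmode.2 (a j) ⟨j, rfl⟩ hsne
        omega
    -- bound on terms outside N
    have hterm : ∀ i, i ∉ N → K ((x - a i) / h) < ε := by
      intro i hi
      apply hKsmall
      have h2 : δ / 2 ≤ |x - a i| := by
        by_contra hlt
        exact hi (Finset.mem_filter.mpr ⟨Finset.mem_univ _, lt_of_not_ge hlt⟩)
      rw [abs_div, abs_of_pos hh]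
      calc M' ≤ δ / (2 * h) := hMle
        _ = (δ / 2) / h := by ring
        _ ≤ |x - a i| / h := by gcongr
    -- sum at x
    have hsx : ∑ i, K ((x - a i) / h) ≤ (N.card : ℝ) * K 0 + (m : ℝ) * ε := by
      rw [← Finset.sum_filter_add_sum_filter_not Finset.univ (fun i => |x - a i| < δ / 2)
        (fun i => K ((x - a i) / h))]
      have h1 : ∑ i ∈ N, K ((x - a i) / h) ≤ (N.card : ℝ) * K 0 := by
        have := Finset.sum_le_card_nsmul N (fun i => K ((x - a i) / h)) (K 0)
          (fun i _ => hle _)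
        rwa [nsmul_eq_mul] at this
      have h2 : ∑ i ∈ Finset.univ.filter (fun i => ¬ |x - a i| < δ / 2),
          K ((x - a i) / h) ≤ (m : ℝ) * ε := by
        have hc : ((Finset.univ.filter (fun i : Fin m => ¬ |x - a i| < δ / 2)).card : ℝ) ≤ m := by
          have h3 : (Finset.univ.filter (fun i : Fin m => ¬ |x - a i| < δ / 2)).card ≤ m :=
            le_trans (Finset.card_filter_le _ _) (by simp)
          exact_mod_cast h3
        have := Finset.sum_le_card_nsmul
          (Finset.univ.filter (fun i : Fin m => ¬ |x - a i| < δ / 2))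
          (fun i => K ((x - a i) / h)) ε
          (fun i hi => le_of_lt (hterm i (by
            intro hmem
            exact (Finset.mem_filter.mp hi).2 (Finset.mem_filter.mp hmem).2)))
        rw [nsmul_eq_mul] at this
        exact le_trans this (mul_le_mul_of_nonneg_right hc hε.le)
      exact add_le_add h1 h2
    -- sum at t
    have hst : (nCount a t : ℝ) * K 0 ≤ ∑ i, K ((t - a i) / h) := by
      have heq : ∑ i ∈ Finset.univ.filter (fun i => a i = t), K ((t - a i) / h)
          = (nCount a t : ℝ) * K 0 := by
        rw [Finset.sum_congr rfl (fun i hi => by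
          rw [(Finset.mem_filter.mp hi).2, sub_self, zero_div] : ∀ i ∈ _, _ = K 0)]
        rw [Finset.sum_const, nsmul_eq_mul, nCount]
      rw [← heq]
      exact Finset.sum_le_sum_of_subset_of_nonneg (Finset.filter_subset _ _)
        (fun i _ _ => hnonneg _)
    have hmε : (m : ℝ) * ε = K 0 / 2 := by
      rw [hεdef]; field_simp
    have hcast : (N.card : ℝ) + 1 ≤ (nCount a t : ℝ) := by exact_mod_cast hcard
    have hlt : ∑ i, K ((x - a i) / h) < ∑ i, K ((t - a i) / h) := by
      have hmul : ((N.card : ℝ) + 1) * K 0 ≤ (nCount a t : ℝ) * K 0 :=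
        mul_le_mul_of_nonneg_right hcast hpos.le
      nlinarith
    unfold KD
    apply mul_lt_mul_of_pos_left hlt
    positivity
  refine ⟨key, fun x hxmax => ?_⟩
  by_contra hge
  push_neg at hge
  exact absurd (hxmax t) (not_le.mpr (key x hge))
end

section
/- Let K : ℝ → ℝ be Lipschitz continuous with Lipschitz constant L_K, let h > 0, and let a = (a_1, ..., a_m) and b = (b_1, ..., b_m) be two finite lists of real numbers of the same length m. Then sup_{x ∈ ℝ} |KD(a, K, h, x) − KD(b, K, h, x)| ≤ (L_K/(m h²)) Σ_{i=1}^m |a_i − b_i|. -/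
open Finset

/-- If `K` is Lipschitz with constant `L_K`, `h > 0`, and `a, b` are
two lists of the same length `m`, then
`sup_x |KD(a,K,h,x) − KD(b,K,h,x)| ≤ (L_K/(m h²)) Σ_i |a_i − b_i|`. -/
theorem stmt2 (K : ℝ → ℝ) (LK : NNReal) (hK : LipschitzWith LK K)
    (h : ℝ) (hh : 0 < h) (m : ℕ) (a b : Fin m → ℝ) :
    ∀ x : ℝ, |KD a K h x - KD b K h x| ≤ ((LK : ℝ) / (m * h ^ 2)) * ∑ i, |a i - b i| := by
  intro x
  rcases Nat.eq_zero_or_pos m with hm | hm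
  · subst hm
    simp [KD]
  have hm' : (0:ℝ) < m := by exact_mod_cast hm
  unfold KD
  rw [← mul_sub, ← Finset.sum_sub_distrib, abs_mul]
  have key : |∑ i, (K ((x - a i) / h) - K ((x - b i) / h))|
      ≤ ∑ i, (LK : ℝ) / h * |a i - b i| := by
    refine (Finset.abs_sum_le_sum_abs _ _).trans (Finset.sum_le_sum fun i _ => ?_)
    have := hK.dist_le_mul ((x - a i) / h) ((x - b i) / h)
    rw [Real.dist_eq, Real.dist_eq] at this
    calc |K ((x - a i) / h) - K ((x - b i) / h)| ≤ (LK : ℝ) * |(x - a i) / h - (x - b i) / h| := this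
      _ = (LK : ℝ) / h * |a i - b i| := by
          rw [div_sub_div_same, abs_div, abs_of_pos hh]
          ring_nf
          rw [abs_sub_comm]
          ring
  calc |1 / (m * h)| * |∑ i, (K ((x - a i) / h) - K ((x - b i) / h))|
      ≤ |1 / (m * h)| * ∑ i, (LK : ℝ) / h * |a i - b i| := by
        exact mul_le_mul_of_nonneg_left key (abs_nonneg _)
    _ = ((LK : ℝ) / (m * h ^ 2)) * ∑ i, |a i - b i| := by
        rw [Finset.mul_sum, Finset.mul_sum]
        refine Finset.sum_congr rfl fun i _ => ?_
        rw [abs_of_pos (by positivity)]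
        field_simp
end

section
/- Let {h_j}_{j≥1} be an orthonormal system in L²(D, f_S) with each h_j ∈ L⁴(D, f_S), let U = Σ_{j≥1} α_u^(j) h_j (L²-convergent, Σ (α_u^(j))² < ∞), and for d ∈ ℕ set U_{>d} = Σ_{k>d} α_u^(k) h_k and S_in = Σ_{j≤d} (α_u^(j))². Assume: (i) max_{1≤j≤d} ‖h_j‖_∞ ≤ M < ∞; (ii) for each j ≤ d the zero set {s : h_j(s) = 0} has f_S-measure zero; (iii) ‖U_{>d}‖²_{f_S} ≤ ε with ε < c_* S_in / (4 M²), where c_* = min_{1≤j≤d} inf{ ∫_D h_j² v² f_S : v ∈ span{h_k : k ≤ d, k ≠ j}, ‖v‖_{f_S} = 1 } > 0. Then for every j ≤ d with α_u^(j) = 0, one has ‖h_j U‖²_{f_S} > ‖h_j U_{>d}‖²_{f_S}. -/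
open MeasureTheory Filter

lemma aux_integrable_mul {E : Type*} [MeasurableSpace E] {μ : Measure E} {f g : E → ℝ}
    (hf : MemLp f 2 μ) (hg : MemLp g 2 μ) : Integrable (fun s => f s * g s) μ := by
  refine Integrable.mono' ((hf.integrable_sq.add hg.integrable_sq).const_mul (1/2))
    (hf.1.mul hg.1) (Filter.Eventually.of_forall fun s => ?_)
  simp only [Real.norm_eq_abs, abs_mul, Pi.add_apply]
  nlinarith [sq_nonneg (|f s| - |g s|), sq_abs (f s), sq_abs (g s)]

/-- Let `{h_j}` be an orthonormal system in `L²(D, f_S)` with each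
`h_j ∈ L⁴`, `U = Σ_{j≥1} α_u^{(j)} h_j` (L²-convergent), `U_{>d} = U − Σ_{k≤d} α_u^{(k)} h_k`
and `S_in = Σ_{j≤d} (α_u^{(j)})²`.  Assume (i) `max_{j≤d} ‖h_j‖_∞ ≤ M`; (ii) each zero
set `{h_j = 0}` (`j ≤ d`) is `f_S`-null; (iii) `‖U_{>d}‖² ≤ ε` with
`ε < c_* S_in/(4M²)`, where `c_*` is the smallest value of `∫ h_j² v² f_S` over `j ≤ d`
and `v` in the unit sphere of `span{h_k : k ≤ d, k ≠ j}`.  Then for every `j ≤ d` with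
`α_u^{(j)} = 0`, `‖h_j U‖² > ‖h_j U_{>d}‖²`. -/
theorem stmt13 {E : Type*} [MeasurableSpace E]
    (μ : Measure E) [IsProbabilityMeasure μ]
    (h : ℕ → E → ℝ)
    (horth : ∀ i j : ℕ, 1 ≤ i → 1 ≤ j →
      ∫ s, h i s * h j s ∂μ = if i = j then (1 : ℝ) else 0)
    (hL4 : ∀ j : ℕ, 1 ≤ j → MemLp (h j) 4 μ)
    (U : E → ℝ) (αu : ℕ → ℝ)
    (hUL2 : MemLp U 2 μ)
    (hαusum : Summable fun k => (αu k) ^ 2)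
    (hUexp : Tendsto
      (fun m => ∫ s, (U s - ∑ k ∈ Finset.Icc 1 m, αu k * h k s) ^ 2 ∂μ) atTop (nhds 0))
    (d : ℕ) (M : ℝ)
    (hM : ∀ j : ℕ, 1 ≤ j → j ≤ d → ∀ s, |h j s| ≤ M)
    (hzero : ∀ j : ℕ, 1 ≤ j → j ≤ d → μ {s | h j s = 0} = 0)
    (ε : ℝ)
    (htail : ∫ s, (U s - ∑ k ∈ Finset.Icc 1 d, αu k * h k s) ^ 2 ∂μ ≤ ε)
    (hεsmall : ε <
      sInf {x : ℝ | ∃ j : ℕ, 1 ≤ j ∧ j ≤ d ∧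
          ∃ v ∈ Submodule.span ℝ (h '' {k : ℕ | 1 ≤ k ∧ k ≤ d ∧ k ≠ j}),
            (∫ s, (v s) ^ 2 ∂μ = 1) ∧ x = ∫ s, (h j s) ^ 2 * (v s) ^ 2 ∂μ} *
        (∑ k ∈ Finset.Icc 1 d, (αu k) ^ 2) / (4 * M ^ 2)) :
    ∀ j : ℕ, 1 ≤ j → j ≤ d → αu j = 0 →
      ∫ s, (h j s * (U s - ∑ k ∈ Finset.Icc 1 d, αu k * h k s)) ^ 2 ∂μ <
        ∫ s, (h j s * U s) ^ 2 ∂μ := by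
  classical
  intro j hj1 hjd hαj
  set C : Set ℝ := {x : ℝ | ∃ j : ℕ, 1 ≤ j ∧ j ≤ d ∧
          ∃ v ∈ Submodule.span ℝ (h '' {k : ℕ | 1 ≤ k ∧ k ≤ d ∧ k ≠ j}),
            (∫ s, (v s) ^ 2 ∂μ = 1) ∧ x = ∫ s, (h j s) ^ 2 * (v s) ^ 2 ∂μ} with hCdef
  set S : ℝ := ∑ k ∈ Finset.Icc 1 d, (αu k) ^ 2 with hSdef
  set V : E → ℝ := fun s => ∑ k ∈ Finset.Icc 1 d, αu k * h k s with hVdef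
  set T : E → ℝ := fun s => U s - V s with hTdef
  have htail' : ∫ s, (T s) ^ 2 ∂μ ≤ ε := htail
  have hjbdd : ∀ s, |h j s| ≤ M := hM j hj1 hjd
  -- basic L² facts
  have hh2 : ∀ k : ℕ, 1 ≤ k → MemLp (h k) 2 μ := fun k hk =>
    (hL4 k hk).mono_exponent (by norm_num)
  have hVL2 : MemLp V 2 μ := by
    refine memLp_finset_sum (Finset.Icc 1 d) (fun k hk => ?_)
    exact ((hh2 k (Finset.mem_Icc.mp hk).1).const_mul (αu k))
  have hTL2 : MemLp T 2 μ := hUL2.sub hVL2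
  have hmulL2 : ∀ g : E → ℝ, MemLp g 2 μ → MemLp (fun s => h j s * g s) 2 μ := by
    intro g hg
    refine MemLp.of_le_mul (c := M) hg (((hL4 j hj1).1).mul hg.1)
      (Filter.Eventually.of_forall fun s => ?_)
    simp only [Real.norm_eq_abs, abs_mul]
    exact mul_le_mul_of_nonneg_right (hjbdd s) (abs_nonneg _)
  have hjT2 : MemLp (fun s => h j s * T s) 2 μ := hmulL2 T hTL2
  have hjU2 : MemLp (fun s => h j s * U s) 2 μ := hmulL2 U hUL2
  have hjV2 : MemLp (fun s => h j s * V s) 2 μ := hmulL2 V hVL2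
  have hTsq : Integrable (fun s => (T s) ^ 2) μ := hTL2.integrable_sq
  have hjTsq : Integrable (fun s => (h j s * T s) ^ 2) μ := hjT2.integrable_sq
  have hjUsq : Integrable (fun s => (h j s * U s) ^ 2) μ := hjU2.integrable_sq
  have hjVsq : Integrable (fun s => (h j s * V s) ^ 2) μ := hjV2.integrable_sq
  -- ∫ V² = S
  have hVnorm : ∫ s, (V s) ^ 2 ∂μ = S := by
    have h1 : ∀ s, (V s) ^ 2 = ∑ k ∈ Finset.Icc 1 d, ∑ l ∈ Finset.Icc 1 d,
        (αu k * αu l) * (h k s * h l s) := by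
      intro s
      rw [hVdef]
      rw [sq, Finset.sum_mul_sum]
      exact Finset.sum_congr rfl fun k _ => Finset.sum_congr rfl fun l _ => by ring
    have hint : ∀ k ∈ Finset.Icc 1 d, ∀ l ∈ Finset.Icc 1 d,
        Integrable (fun s => (αu k * αu l) * (h k s * h l s)) μ := by
      intro k hk l hl
      exact (aux_integrable_mul (hh2 k (Finset.mem_Icc.mp hk).1)
        (hh2 l (Finset.mem_Icc.mp hl).1)).const_mul _
    calc ∫ s, (V s) ^ 2 ∂μ
        = ∫ s, ∑ k ∈ Finset.Icc 1 d, ∑ l ∈ Finset.Icc 1 d,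
            (αu k * αu l) * (h k s * h l s) ∂μ := by simp_rw [h1]
      _ = ∑ k ∈ Finset.Icc 1 d, ∑ l ∈ Finset.Icc 1 d,
            ∫ s, (αu k * αu l) * (h k s * h l s) ∂μ := by
          rw [integral_finset_sum _ (fun k hk => integrable_finset_sum _ (hint k hk))]
          exact Finset.sum_congr rfl fun k hk => integral_finset_sum _ (hint k hk)
      _ = ∑ k ∈ Finset.Icc 1 d, ∑ l ∈ Finset.Icc 1 d,
            (αu k * αu l) * (if k = l then (1:ℝ) else 0) := by
          refine Finset.sum_congr rfl fun k hk => Finset.sum_congr rfl fun l hl => ?_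
          rw [integral_const_mul, horth k l (Finset.mem_Icc.mp hk).1 (Finset.mem_Icc.mp hl).1]
      _ = S := by
          rw [hSdef]
          refine Finset.sum_congr rfl fun k hk => ?_
          rw [Finset.sum_eq_single k]
          · simp [sq]
          · intro l _ hlk; simp [Ne.symm hlk]
          · intro hk'; exact absurd hk hk'
  -- positivity facts
  have hε0 : 0 ≤ ε := le_trans (integral_nonneg fun s => sq_nonneg _) htail'
  have hS0 : 0 ≤ S := Finset.sum_nonneg fun k _ => sq_nonneg _
  have hM2 : 0 < M ^ 2 := by
    rcases eq_or_ne M 0 with h0 | h0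
    · rw [h0] at hεsmall; norm_num at hεsmall; linarith
    · positivity
  have hSpos : 0 < S := by
    rcases hS0.lt_or_eq with hlt | heq
    · exact hlt
    · exfalso; rw [← heq] at hεsmall; simp at hεsmall; linarith
  -- the candidate element of C
  set c0 : ℝ := (Real.sqrt S)⁻¹ with hc0def
  have hc0sq : c0 ^ 2 = S⁻¹ := by rw [hc0def, inv_pow, Real.sq_sqrt hS0]
  have hVmem : V ∈ Submodule.span ℝ (h '' {k : ℕ | 1 ≤ k ∧ k ≤ d ∧ k ≠ j}) := by
    have hVsum : V = ∑ k ∈ Finset.Icc 1 d, αu k • h k := by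
      funext s; simp [hVdef, Finset.sum_apply]
    rw [hVsum]
    refine Submodule.sum_mem _ fun k hk => ?_
    rcases eq_or_ne k j with rfl | hkj
    · rw [hαj, zero_smul]; exact Submodule.zero_mem _
    · exact Submodule.smul_mem _ _ (Submodule.subset_span
        ⟨k, ⟨(Finset.mem_Icc.mp hk).1, (Finset.mem_Icc.mp hk).2, hkj⟩, rfl⟩)
  have hvmem : (c0 • V) ∈ Submodule.span ℝ (h '' {k : ℕ | 1 ≤ k ∧ k ≤ d ∧ k ≠ j}) :=
    Submodule.smul_mem _ _ hVmem
  have hvnorm : ∫ s, ((c0 • V) s) ^ 2 ∂μ = 1 := by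
    simp only [Pi.smul_apply, smul_eq_mul, mul_pow]
    rw [integral_const_mul, hVnorm, hc0sq, inv_mul_cancel₀ hSpos.ne']
  have hmem : (∫ s, (h j s) ^ 2 * ((c0 • V) s) ^ 2 ∂μ) ∈ C :=
    ⟨j, hj1, hjd, c0 • V, hvmem, hvnorm, rfl⟩
  have hbdd : BddBelow C := by
    refine ⟨0, fun x hx => ?_⟩
    obtain ⟨j', _, _, v, _, _, rfl⟩ := hx
    exact integral_nonneg fun s => mul_nonneg (sq_nonneg _) (sq_nonneg _)
  set A : ℝ := ∫ s, (h j s * V s) ^ 2 ∂μ with hAdef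
  have hxval : ∫ s, (h j s) ^ 2 * ((c0 • V) s) ^ 2 ∂μ = S⁻¹ * A := by
    have heq : ∀ s, (h j s) ^ 2 * ((c0 • V) s) ^ 2 = c0 ^ 2 * (h j s * V s) ^ 2 := by
      intro s; simp only [Pi.smul_apply, smul_eq_mul]; ring
    simp_rw [heq]
    rw [integral_const_mul, hc0sq, hAdef]
  have hcle : sInf C ≤ S⁻¹ * A := hxval ▸ csInf_le hbdd hmem
  have hCS : sInf C * S ≤ A := by
    have := mul_le_mul_of_nonneg_right hcle hS0
    calc sInf C * S ≤ (S⁻¹ * A) * S := this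
      _ = A := by field_simp
  have hεA : ε * (4 * M ^ 2) < A := by
    have h4M : (0:ℝ) < 4 * M ^ 2 := by linarith
    have h3 : ε * (4 * M ^ 2) < sInf C * S := (lt_div_iff₀ h4M).mp hεsmall
    linarith
  -- tail bound
  have hjT_le : ∫ s, (h j s * T s) ^ 2 ∂μ ≤ M ^ 2 * ε := by
    have h1 : ∫ s, (h j s * T s) ^ 2 ∂μ ≤ ∫ s, M ^ 2 * (T s) ^ 2 ∂μ := by
      refine integral_mono hjTsq (hTsq.const_mul _) fun s => ?_
      have h5 : (h j s) ^ 2 ≤ M ^ 2 := by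
        calc (h j s) ^ 2 = |h j s| ^ 2 := (sq_abs _).symm
          _ ≤ M ^ 2 := pow_le_pow_left₀ (abs_nonneg _) (hjbdd s) 2
      calc (h j s * T s) ^ 2 = (h j s) ^ 2 * (T s) ^ 2 := by ring
        _ ≤ M ^ 2 * (T s) ^ 2 := mul_le_mul_of_nonneg_right h5 (sq_nonneg _)
    rw [integral_const_mul] at h1
    have h4 : M ^ 2 * ∫ s, (T s) ^ 2 ∂μ ≤ M ^ 2 * ε :=
      mul_le_mul_of_nonneg_left htail' (sq_nonneg M)
    linarith
  -- key pointwise inequality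
  have hkey : (1/2) * A - ∫ s, (h j s * T s) ^ 2 ∂μ ≤ ∫ s, (h j s * U s) ^ 2 ∂μ := by
    have h1 : ∫ s, ((1/2) * (h j s * V s) ^ 2 - (h j s * T s) ^ 2) ∂μ ≤
        ∫ s, (h j s * U s) ^ 2 ∂μ := by
      refine integral_mono ((hjVsq.const_mul _).sub hjTsq) hjUsq fun s => ?_
      have hUs : U s = V s + T s := by rw [hTdef]; ring
      rw [hUs, ← sub_nonneg]
      have hid : (h j s * (V s + T s)) ^ 2 -
          (1/2 * (h j s * V s) ^ 2 - (h j s * T s) ^ 2) =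
          (h j s * V s + 2 * (h j s * T s)) ^ 2 / 2 := by ring
      rw [hid]
      positivity
    rw [integral_sub (hjVsq.const_mul _) hjTsq, integral_const_mul] at h1
    rw [hAdef]
    linarith
  show ∫ s, (h j s * T s) ^ 2 ∂μ < ∫ s, (h j s * U s) ^ 2 ∂μ
  have hjT0 : 0 ≤ ∫ s, (h j s * T s) ^ 2 ∂μ := integral_nonneg fun s => sq_nonneg _
  linarith
end
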